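/- Let p be an odd prime and k, ℓ positive integers with p ∤ k, and suppose N = 2·k·p^ℓ − 1 is an odd prime. Let Q be a prime such that the Jacobi symbol (Q/N) = −1, and let w ∈ ℤ[√Q] satisfy N(w) ≡ 1 (mod N). Then at least one of the following holds: (i) w^{2k} ≡ 1 (mod N); or (ii) there exists an integer j with 0 ≤ j < ℓ such that Φ_p(w^{2k·p^{j}}) ≡ 0 (mod N). -/
import Mathlib

open Polynomial

/-- Theorem 9.3: Miller–Rabin style statement for an odd prime
`N = 2·k·p^ℓ − 1` over `ℤ[√Q]` for a prime `Q` with `(Q/N) = −1`. -/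
theorem stmt_14 (p : ℕ) (hp : p.Prime) (hpodd : Odd p)
    (k ℓ : ℕ) (hk : 0 < k) (hℓ : 0 < ℓ) (hpk : ¬ p ∣ k)
    (N : ℕ) (hN : N = 2 * k * p ^ ℓ - 1) (hNodd : Odd N) (hNprime : N.Prime)
    (Q : ℕ) (hQ : Q.Prime) (hJ : jacobiSym (Q : ℤ) N = -1)
    (w : Zsqrtd (Q : ℤ))
    (hnorm : (N : ℤ) ∣ (w.norm - 1)) :
    (N : Zsqrtd (Q : ℤ)) ∣ (w ^ (2 * k) - 1) ∨
      ∃ j : ℕ, j < ℓ ∧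
        (N : Zsqrtd (Q : ℤ)) ∣
          (Polynomial.aeval (w ^ (2 * k * p ^ j)) (Polynomial.cyclotomic p ℤ)) := by
  haveI hfN : Fact N.Prime := ⟨hNprime⟩
  haveI hfp : Fact p.Prime := ⟨hp⟩
  -- N + 1 = 2 k p ^ ℓ
  have hpow : 0 < 2 * k * p ^ ℓ := Nat.mul_pos (Nat.mul_pos two_pos hk) (pow_pos hp.pos ℓ)
  have hN1 : N + 1 = 2 * k * p ^ ℓ := by omega
  -- Q is a nonresidue mod N
  have hleg : legendreSym N (Q : ℤ) = -1 := by
    rw [jacobiSym.legendreSym.to_jacobiSym]; exact_mod_cast hJ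
  have hns : ¬ IsSquare (((Q : ℤ) : ZMod N)) := (legendreSym.eq_neg_one_iff N).mp hleg
  have hcastQ : (((Q : ℤ) : ZMod N)) = ((Q : ℕ) : ZMod N) := by push_cast; ring
  set qn : ZMod N := ((Q : ℕ) : ZMod N) with hqn
  set f : Polynomial (ZMod N) := X ^ 2 - C qn with hf
  have hirr : Irreducible f :=
    X_pow_sub_C_irreducible_of_prime Nat.prime_two
      (fun b hb => hns (by rw [hcastQ, ← hb, sq]; exact ⟨b, rfl⟩))
  haveI := Fact.mk hirr
  set F := AdjoinRoot f with hF
  haveI hchar : CharP F N :=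
    charP_of_injective_algebraMap (algebraMap (ZMod N) F).injective N
  set s : F := AdjoinRoot.root f with hs
  have hs2' : s ^ 2 = AdjoinRoot.of f qn := by
    have h := AdjoinRoot.eval₂_root f
    rw [hf] at h
    simp only [eval₂_sub, eval₂_pow, eval₂_X, eval₂_C, sub_eq_zero] at h
    exact h
  have hs2 : s * s = ((Q : ℤ) : F) := by
    rw [← sq, hs2', hqn, map_natCast]
    push_cast; ring
  set φ : Zsqrtd ((Q : ℕ) : ℤ) →+* F := Zsqrtd.lift ⟨s, hs2⟩ with hφ
  -- ℤ casts into F factor through ZMod N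
  have hint : ∀ a : ℤ, ((a : F)) = AdjoinRoot.of f ((a : ZMod N)) := fun a =>
    (map_intCast (AdjoinRoot.of f) a).symm
  -- kernel lemma
  have hker : ∀ z : Zsqrtd ((Q : ℕ) : ℤ), φ z = 0 → (N : Zsqrtd ((Q : ℕ) : ℤ)) ∣ z := by
    intro z hz
    rw [Zsqrtd.lift_apply_apply] at hz
    have h1 : AdjoinRoot.mk f (C ((z.re : ZMod N)) + C ((z.im : ZMod N)) * X) = 0 := by
      rw [map_add, map_mul, AdjoinRoot.mk_C, AdjoinRoot.mk_C, AdjoinRoot.mk_X]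
      rw [hint z.re, hint z.im] at hz
      exact hz
    rw [AdjoinRoot.mk_eq_zero] at h1
    have hdeg : (C ((z.re : ZMod N)) + C ((z.im : ZMod N)) * X).degree < f.degree := by
      rw [hf, degree_X_pow_sub_C (by norm_num)]
      calc (C ((z.re : ZMod N)) + C ((z.im : ZMod N)) * X).degree
          ≤ max (C ((z.re : ZMod N))).degree ((C ((z.im : ZMod N))) * X).degree :=
            degree_add_le _ _
        _ ≤ max 0 1 := max_le_max degree_C_le (degree_C_mul_X_le _)
        _ < 2 := by norm_num
    have h2 : (C ((z.re : ZMod N)) + C ((z.im : ZMod N)) * X) = 0 :=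
      eq_zero_of_dvd_of_degree_lt h1 hdeg
    have hre : ((z.re : ZMod N)) = 0 := by
      have h3 := congrArg (fun P => Polynomial.coeff P 0) h2
      simp only [coeff_add, coeff_C_mul, coeff_X_zero, coeff_C, coeff_zero, mul_zero,
        add_zero, if_pos rfl] at h3
      exact h3
    have him : ((z.im : ZMod N)) = 0 := by
      have h3 := congrArg (fun P => Polynomial.coeff P 1) h2
      simp only [coeff_add, coeff_C_mul, coeff_X_one, coeff_C, coeff_zero, mul_one,
        if_neg (one_ne_zero), zero_add] at h3
      exact h3
    have : ((N : ℤ) : Zsqrtd ((Q : ℕ) : ℤ)) ∣ z :=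
      (Zsqrtd.intCast_dvd _ _).mpr
        ⟨(ZMod.intCast_zmod_eq_zero_iff_dvd _ _).mp hre,
         (ZMod.intCast_zmod_eq_zero_iff_dvd _ _).mp him⟩
    simpa using this
  -- Euler's criterion
  obtain ⟨m, hm⟩ := hNodd
  have hm2 : N / 2 = m := by omega
  have heuler : qn ^ m = -1 := by
    have h := legendreSym.eq_pow N (Q : ℤ)
    rw [hleg, hcastQ, hm2] at h
    rw [hqn, ← h]
    push_cast
    ring
  -- s ^ N = -s
  have hsN : s ^ N = -s := by
    have h1 : s ^ N = (s ^ 2) ^ m * s := by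
      rw [← pow_mul, ← pow_succ]
      exact congrArg (fun n => s ^ n) (by omega)
    rw [h1, hs2', ← map_pow, heuler, map_neg, map_one]
    ring
  -- base field elements are fixed by Frobenius
  have hfix : ∀ a : ℤ, ((a : F)) ^ N = (a : F) := by
    intro a
    rw [hint a, ← map_pow, ZMod.pow_card]
  -- u ^ (N+1) = 1
  set u : F := φ w with hu
  have huN : u ^ N = φ (star w) := by
    rw [hu, hφ, Zsqrtd.lift_apply_apply, Zsqrtd.lift_apply_apply]
    rw [add_pow_char, mul_pow, hfix, hfix, hsN, Zsqrtd.re_star, Zsqrtd.im_star]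
    push_cast; ring
  have hu1 : u ^ (N + 1) = 1 := by
    obtain ⟨t, ht⟩ := hnorm
    have hw : w * star w = ((1 + (N : ℤ) * t : ℤ) : Zsqrtd ((Q : ℕ) : ℤ)) := by
      rw [← Zsqrtd.norm_eq_mul_conj]
      congr 1; omega
    rw [pow_succ, huN, hu, ← map_mul, mul_comm, hw, map_intCast]
    push_cast
    rw [(CharP.cast_eq_zero F N : ((N : ℕ) : F) = 0)]
    ring
  set v : F := u ^ (2 * k) with hv
  have hvl : v ^ (p ^ ℓ) = 1 := by
    rw [hv, ← pow_mul, ← hN1, hu1]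
  -- induction
  have key : ∀ n : ℕ, v ^ (p ^ n) = 1 →
      v = 1 ∨ ∃ j, j < n ∧ v ^ (p ^ j) ≠ 1 ∧ (v ^ (p ^ j)) ^ p = 1 := by
    intro n
    induction n with
    | zero => intro h; left; simpa using h
    | succ n ih =>
      intro h
      by_cases hx : v ^ (p ^ n) = 1
      · rcases ih hx with h1 | ⟨j, hj, hj1, hj2⟩
        · exact Or.inl h1
        · exact Or.inr ⟨j, hj.trans (Nat.lt_succ_self n), hj1, hj2⟩
      · refine Or.inr ⟨n, Nat.lt_succ_self n, hx, ?_⟩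
        rw [← pow_mul, ← pow_succ]
        exact h
  rcases key ℓ hvl with h1 | ⟨j, hj, hx1, hxp⟩
  · left
    apply hker
    rw [map_sub, map_pow, map_one, ← hu, ← hv, h1, sub_self]
  · right
    refine ⟨j, hj, hker _ ?_⟩
    set x : F := v ^ (p ^ j) with hx
    have hphiw : φ (w ^ (2 * k * p ^ j)) = x := by
      rw [hx, hv, map_pow, ← hu, pow_mul]
    have hphi : φ ((Polynomial.aeval (w ^ (2 * k * p ^ j))) (Polynomial.cyclotomic p ℤ))
        = ∑ i ∈ Finset.range p, x ^ i := by
      rw [Polynomial.cyclotomic_prime]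
      simp only [map_sum, map_pow, Polynomial.aeval_X]
      simp only [← map_pow, hphiw]
    rw [hphi]
    have hgeo : (∑ i ∈ Finset.range p, x ^ i) * (x - 1) = 0 := by
      rw [geom_sum_mul, hxp, sub_self]
    rcases mul_eq_zero.mp hgeo with h | h
    · exact h
    · exact absurd (sub_eq_zero.mp h) hx1
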